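/- Consider the constant kernel K ≡ 2 and zero initial data. Let (f_t)_{t≥0} be a family of positive Radon measures on (0,∞) such that ∫ x f_t(dx) < ∞ for every t ≥ 0, the map t ↦ ∫ x φ(x) f_t(dx) is continuous for every continuous compactly supported φ : (0,∞) → ℝ, and for every continuously differentiable, compactly supported φ : [0,∞) → ℝ and every t ≥ 0: ∫ x φ(x) f_t(dx) = ∫_0^t ∬_{(0,∞)²} [(x+y)φ(x+y) − xφ(x) − yφ(y)] f_s(dx) f_s(dy) ds + t·φ(0). Then the Bernstein transform of f_t is uniquely determined: for all t ≥ 0 and λ > 0, ∫_{(0,∞)} (1 − e^{−λx}) f_t(dx) = √λ · tanh(√λ · t). -/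

import Mathlib

open MeasureTheory Set ENNReal Real Filter


noncomputable section

lemma expNegInvGlue_monotone : Monotone expNegInvGlue := by
  intro u v huv
  rcases le_or_gt v 0 with hv | hv
  · rw [expNegInvGlue.zero_of_nonpos hv, expNegInvGlue.zero_of_nonpos (huv.trans hv)]
  rcases le_or_gt u 0 with hu | hu
  · rw [expNegInvGlue.zero_of_nonpos hu]
    exact (expNegInvGlue.pos_of_pos hv).le
  · have hu' : ¬ u ≤ 0 := not_le.2 hu
    have hv' : ¬ v ≤ 0 := not_le.2 hv
    simp only [expNegInvGlue, if_neg hu', if_neg hv']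
    apply Real.exp_le_exp.2
    simp only [neg_le_neg_iff]
    exact inv_anti₀ hu huv

lemma smoothTransition_monotone : Monotone Real.smoothTransition := by
  intro u v huv
  unfold Real.smoothTransition
  set f := expNegInvGlue
  have hd : ∀ x : ℝ, 0 < f x + f (1 - x) := by
    intro x
    rcases lt_or_ge 0 x with hx | hx
    · exact add_pos_of_pos_of_nonneg (expNegInvGlue.pos_of_pos hx) (expNegInvGlue.nonneg _)
    · exact add_pos_of_nonneg_of_pos (expNegInvGlue.nonneg _)
        (expNegInvGlue.pos_of_pos (by linarith))
  rw [div_le_div_iff₀ (hd u) (hd v)]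
  have h1 : f u ≤ f v := expNegInvGlue_monotone huv
  have h2 : f (1 - v) ≤ f (1 - u) := expNegInvGlue_monotone (by linarith)
  have h3 : f u * f (1 - v) ≤ f v * f (1 - u) :=
    mul_le_mul h1 h2 (expNegInvGlue.nonneg _) (expNegInvGlue.nonneg _)
  nlinarith [expNegInvGlue.nonneg u, expNegInvGlue.nonneg v, expNegInvGlue.nonneg (1-u),
    expNegInvGlue.nonneg (1-v)]

/-- abbreviation -/
local notation "T" => Real.smoothTransition

lemma deriv_T_eq_zero {x : ℝ} (hx : x < 0 ∨ 1 < x) : deriv T x = 0 := by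
  have : deriv (fun _ : ℝ => (if 1 < x then (1:ℝ) else 0)) x = 0 := deriv_const _ _
  rw [← this]
  apply Filter.EventuallyEq.deriv_eq
  rcases hx with hx | hx
  · have : Iio (0:ℝ) ∈ nhds x := Iio_mem_nhds hx
    filter_upwards [this] with y hy
    rw [if_neg (by linarith), Real.smoothTransition.zero_of_nonpos (le_of_lt hy)]
  · have : Ioi (1:ℝ) ∈ nhds x := Ioi_mem_nhds hx
    filter_upwards [this] with y hy
    rw [if_pos hx, Real.smoothTransition.one_of_one_le (le_of_lt hy)]

lemma bounded_of_zero_outside {g : ℝ → ℝ} (hg : Continuous g)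
    (h0 : ∀ x : ℝ, x < 0 ∨ 1 < x → g x = 0) : ∃ C : ℝ, 0 ≤ C ∧ ∀ x, |g x| ≤ C := by
  have hsupp : HasCompactSupport g := by
    apply HasCompactSupport.intro (isCompact_Icc (a := (0:ℝ)) (b := 1))
    intro x hx
    simp only [mem_Icc, not_and_or, not_le] at hx
    exact h0 x (by tauto)
  obtain ⟨x0, hx0⟩ := (hg.abs).exists_forall_ge_of_hasCompactSupport (hsupp.abs)
  exact ⟨|g x0|, abs_nonneg _, hx0⟩

lemma T_contDiff_two : ContDiff ℝ (1 + 1 : WithTop ℕ∞) T := by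
  have := Real.smoothTransition.contDiff (n := 2)
  exact_mod_cast this

lemma T_deriv_contDiff : ContDiff ℝ (1 : WithTop ℕ∞) (deriv T) :=
  (contDiff_succ_iff_deriv.mp T_contDiff_two).2.2

lemma deriv_deriv_T_eq_zero {x : ℝ} (hx : x < 0 ∨ 1 < x) : deriv (deriv T) x = 0 := by
  have : deriv (fun _ : ℝ => (0:ℝ)) x = 0 := deriv_const _ _
  rw [← this]
  apply Filter.EventuallyEq.deriv_eq
  rcases hx with hx | hx
  · filter_upwards [Iio_mem_nhds hx] with y hy
    exact deriv_T_eq_zero (Or.inl hy)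
  · filter_upwards [Ioi_mem_nhds hx] with y hy
    exact deriv_T_eq_zero (Or.inr hy)

lemma T_deriv_bounds : ∃ C₁ C₂ : ℝ, 0 ≤ C₁ ∧ 0 ≤ C₂ ∧ (∀ x, |deriv T x| ≤ C₁) ∧
    (∀ x, |deriv (deriv T) x| ≤ C₂) := by
  obtain ⟨C₁, hC₁0, hC₁⟩ := bounded_of_zero_outside
    (T_deriv_contDiff.continuous) (fun x hx => deriv_T_eq_zero hx)
  obtain ⟨C₂, hC₂0, hC₂⟩ := bounded_of_zero_outside
    ((contDiff_succ_iff_deriv.mp (show ContDiff ℝ ((0:WithTop ℕ∞)+1) (deriv T) by norm_num; exact T_deriv_contDiff)).2.2.continuous)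
    (fun x hx => deriv_deriv_T_eq_zero hx)
  exact ⟨C₁, C₂, hC₁0, hC₂0, hC₁, hC₂⟩

end


noncomputable section

local notation "T" => Real.smoothTransition

/-- the function `1 - exp(-(l x))` -/
def w0 (l : ℝ) : ℝ → ℝ := fun x => 1 - Real.exp (-(l * x))

lemma w0_zero (l : ℝ) : w0 l 0 = 0 := by simp [w0]

lemma hasDerivAt_w0 (l x : ℝ) : HasDerivAt (w0 l) (l * Real.exp (-(l * x))) x := by
  have h1 : HasDerivAt (fun x : ℝ => -(l * x)) (-l) x := by
    exact ((hasDerivAt_id x).const_mul l).neg.congr_deriv (by simp)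
  have h2 := h1.exp
  have := (hasDerivAt_const x (1:ℝ)).sub h2
  exact this.congr_deriv (by ring)

lemma contDiff_dslope_w0 (l : ℝ) : ContDiff ℝ 1 (dslope (w0 l) 0) := by
  rw [contDiff_iff_contDiffAt]
  intro x
  rcases eq_or_ne x 0 with rfl | hx
  · have hA : AnalyticAt ℝ (w0 l) 0 := by
      have h1 : AnalyticAt ℝ (fun x : ℝ => -(l * x)) 0 :=
        ((analyticAt_const (v := l)).mul analyticAt_id).neg
      have h2 : AnalyticAt ℝ (fun x : ℝ => Real.exp (-(l * x))) 0 := h1.rexp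
      exact analyticAt_const.sub h2
    obtain ⟨p, hp⟩ := hA
    have : AnalyticAt ℝ (dslope (w0 l) 0) 0 := ⟨_, hp.has_fpower_series_dslope_fslope⟩
    exact this.contDiffAt
  · have hcd : ContDiffAt ℝ 1 (fun y : ℝ => w0 l y / y) x := by
      apply ContDiffAt.div
      · exact (contDiff_const.sub (Real.contDiff_exp.comp ((contDiff_const.mul contDiff_id).neg))).contDiffAt
      · exact contDiffAt_id
      · exact hx
    apply hcd.congr_of_eventuallyEq
    filter_upwards [isOpen_ne.mem_nhds hx] with y hy
    rw [dslope_of_ne _ hy, slope_def_field, w0_zero]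
    simp [div_eq_mul_inv]

lemma dslope_w0_at_pos (l x : ℝ) (hx : x ≠ 0) : x * dslope (w0 l) 0 x = w0 l x := by
  rw [dslope_of_ne _ hx, slope_def_field, w0_zero]
  field_simp
  ring

lemma dslope_w0_at_zero (l : ℝ) : dslope (w0 l) 0 0 = l := by
  rw [dslope_same]
  have := (hasDerivAt_w0 l 0).deriv
  simpa using this

/-- the rescaled cutoff -/
def chi (n : ℕ) : ℝ → ℝ := fun u => T (2 - u / (n + 1))

lemma chi_contDiff (n : ℕ) : ContDiff ℝ 1 (chi n) :=
  (Real.smoothTransition.contDiff (n := 1)).comp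
    ((contDiff_const.sub (contDiff_id.div_const _)))

lemma chi_nonneg (n : ℕ) (u : ℝ) : 0 ≤ chi n u := Real.smoothTransition.nonneg _
lemma chi_le_one (n : ℕ) (u : ℝ) : chi n u ≤ 1 := Real.smoothTransition.le_one _

lemma chi_eq_one (n : ℕ) {u : ℝ} (hu : u ≤ n + 1) : chi n u = 1 := by
  apply Real.smoothTransition.one_of_one_le
  have hn : (0:ℝ) < n + 1 := by positivity
  have : u / (n+1) ≤ 1 := by rw [div_le_one hn]; linarith
  linarith

lemma chi_eq_zero (n : ℕ) {u : ℝ} (hu : 2 * (n + 1) ≤ u) : chi n u = 0 := by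
  apply Real.smoothTransition.zero_of_nonpos
  rw [sub_nonpos]
  have hn : (0:ℝ) < n + 1 := by positivity
  rw [le_div_iff₀ hn]
  linarith

lemma chi_antitone (n : ℕ) : ∀ a b : ℝ, a ≤ b → chi n b ≤ chi n a := by
  intro a b hab
  apply smoothTransition_monotone
  have hn : (0:ℝ) < n + 1 := by positivity
  have : a / (n+1) ≤ b / (n+1) := by gcongr
  linarith

end

-- part 3 : derivatives of hfun and the key product bound
noncomputable section
local notation "T" => Real.smoothTransition

/-- the truncated Bernstein test integrand -/
def hfun (l : ℝ) (n : ℕ) : ℝ → ℝ := fun u => w0 l u * chi n u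

lemma hfun_zero (l : ℝ) (n : ℕ) : hfun l n 0 = 0 := by simp [hfun, w0_zero]

lemma hfun_abs_le_one (l : ℝ) (hl : 0 < l) (n : ℕ) {u : ℝ} (hu : 0 ≤ u) : |hfun l n u| ≤ 1 := by
  have h1 : 0 ≤ w0 l u := by
    simp only [w0, sub_nonneg]
    exact Real.exp_le_one_iff.2 (by nlinarith)
  have h2 : w0 l u ≤ 1 := by
    simp only [w0, sub_le_self_iff]
    positivity
  have := chi_nonneg n u
  have := chi_le_one n u
  rw [abs_le, hfun]
  constructor <;> nlinarith

lemma hasDerivAt_chi (n : ℕ) (u : ℝ) :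
    HasDerivAt (chi n) (deriv T (2 - u / (n + 1)) * (-(1 / (n + 1)))) u := by
  have hT : HasDerivAt T (deriv T (2 - u / (n+1))) (2 - u / (n+1)) :=
    ((Real.smoothTransition.contDiff (n := 1)).differentiable (by norm_num) _).hasDerivAt
  have hc : HasDerivAt (fun u : ℝ => 2 - u / (n+1)) (-(1/(n+1))) u := by
    simpa [one_div] using ((hasDerivAt_id u).div_const ((n:ℝ)+1)).const_sub 2
  exact hT.comp u hc

lemma hasDerivAt_derivchi (n : ℕ) (u : ℝ) :
    HasDerivAt (fun u => deriv T (2 - u / (n + 1)) * (-(1 / (n + 1))))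
      (deriv (deriv T) (2 - u / (n + 1)) * (-(1 / (n + 1))) * (-(1 / (n + 1)))) u := by
  have hT : HasDerivAt (deriv T) (deriv (deriv T) (2 - u / (n+1))) (2 - u / (n+1)) :=
    ((T_deriv_contDiff.differentiable (by norm_num)) _).hasDerivAt
  have hc : HasDerivAt (fun u : ℝ => 2 - u / (n+1)) (-(1/(n+1))) u := by
    simpa [one_div] using ((hasDerivAt_id u).div_const ((n:ℝ)+1)).const_sub 2
  exact ((hT.comp u hc).mul_const _)

/-- first and second derivatives of `hfun` with uniform (in `n`) bounds on `[0, ∞)`. -/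
lemma hfun_derivs (l : ℝ) (hl : 0 < l) : ∃ L M : ℝ, 0 < L ∧ 0 < M ∧
    ∀ n : ℕ, ∃ h' h'' : ℝ → ℝ,
      (∀ u, HasDerivAt (hfun l n) (h' u) u) ∧
      (∀ u, HasDerivAt h' (h'' u) u) ∧
      (∀ u ∈ Ici (0:ℝ), |h' u| ≤ L) ∧ (∀ u ∈ Ici (0:ℝ), |h'' u| ≤ M) := by
  obtain ⟨C₁, C₂, hC₁0, hC₂0, hC₁, hC₂⟩ := T_deriv_bounds
  refine ⟨l + C₁ + 1, l*l + 2*l*C₁ + C₂ + 1, by positivity, by positivity, fun n => ?_⟩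
  set c : ℝ → ℝ := fun u => 2 - u / (n+1) with hc
  have hinv : (0:ℝ) < 1/(n+1) := by positivity
  have hinv1 : (1:ℝ)/(n+1) ≤ 1 := by
    rw [div_le_one (by positivity)]
    simp
  refine ⟨fun u => l * Real.exp (-(l*u)) * chi n u + w0 l u * (deriv T (c u) * (-(1/(n+1)))),
      fun u => (l * (-l) * Real.exp (-(l*u))) * chi n u
        + (l * Real.exp (-(l*u))) * (deriv T (c u) * (-(1/(n+1))))
        + ((l * Real.exp (-(l*u))) * (deriv T (c u) * (-(1/(n+1))))
          + w0 l u * (deriv (deriv T) (c u) * (-(1/(n+1))) * (-(1/(n+1))))),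
      fun u => ?_, fun u => ?_, fun u hu => ?_, fun u hu => ?_⟩
  · exact (hasDerivAt_w0 l u).mul (hasDerivAt_chi n u)
  · apply HasDerivAt.add
    · -- derivative of l * exp(-(l u)) * chi n u
      have h1 : HasDerivAt (fun u : ℝ => l * Real.exp (-(l*u))) (l * (-l) * Real.exp (-(l*u))) u := by
        have hb : HasDerivAt (fun u : ℝ => -(l * u)) (-l) u := by
          exact ((hasDerivAt_id u).const_mul l).neg.congr_deriv (by simp)
        have := (hb.exp).const_mul l
        exact this.congr_deriv (by ring)
      exact h1.mul (hasDerivAt_chi n u)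
    · exact (hasDerivAt_w0 l u).mul (hasDerivAt_derivchi n u)
  · -- bound for h'
    have he : Real.exp (-(l*u)) ≤ 1 := Real.exp_le_one_iff.2 (by nlinarith [mem_Ici.1 hu])
    have he0 : 0 < Real.exp (-(l*u)) := Real.exp_pos _
    have hw0 : 0 ≤ w0 l u := by
      simp only [w0, sub_nonneg]; exact Real.exp_le_one_iff.2 (by nlinarith [mem_Ici.1 hu])
    have hw1 : w0 l u ≤ 1 := by simp only [w0, sub_le_self_iff]; positivity
    have hx := chi_nonneg n u; have hy := chi_le_one n u
    have hT1 := hC₁ (c u)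
    have habs : |l * Real.exp (-(l*u)) * chi n u| ≤ l := by
      rw [abs_of_nonneg (by positivity)]
      calc l * Real.exp (-(l*u)) * chi n u ≤ l * 1 * 1 := by
            apply mul_le_mul (by nlinarith) hy hx (by positivity)
        _ = l := by ring
    have habs2 : |w0 l u * (deriv T (c u) * (-(1/(n+1))))| ≤ C₁ := by
      rw [abs_mul, abs_mul, abs_neg, abs_of_nonneg hinv.le, abs_of_nonneg hw0]
      calc w0 l u * (|deriv T (c u)| * (1/(n+1))) ≤ 1 * (C₁ * 1) := by
            apply mul_le_mul hw1 _ (by positivity) zero_le_one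
            exact mul_le_mul hT1 hinv1 hinv.le hC₁0
        _ = C₁ := by ring
    calc |_| ≤ l + C₁ := (abs_add_le _ _).trans (by gcongr)
      _ ≤ l + C₁ + 1 := by linarith
  · -- bound for h''
    have he : Real.exp (-(l*u)) ≤ 1 := Real.exp_le_one_iff.2 (by nlinarith [mem_Ici.1 hu])
    have he0 : 0 < Real.exp (-(l*u)) := Real.exp_pos _
    have hw0 : 0 ≤ w0 l u := by
      simp only [w0, sub_nonneg]; exact Real.exp_le_one_iff.2 (by nlinarith [mem_Ici.1 hu])
    have hw1 : w0 l u ≤ 1 := by simp only [w0, sub_le_self_iff]; positivity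
    have hx := chi_nonneg n u; have hy := chi_le_one n u
    have hT1 := hC₁ (c u); have hT2 := hC₂ (c u)
    have e1 : |(l * (-l) * Real.exp (-(l*u))) * chi n u| ≤ l * l := by
      rw [abs_mul]
      have : |l * (-l) * Real.exp (-(l*u))| ≤ l * l := by
        have hring : l * (-l) * Real.exp (-(l*u)) = -(l * l * Real.exp (-(l*u))) := by ring
        rw [hring, abs_neg, abs_of_nonneg (by positivity)]
        nlinarith
      have h2 : |chi n u| ≤ 1 := by rw [abs_of_nonneg hx]; exact hy
      calc |l * (-l) * Real.exp (-(l*u))| * |chi n u| ≤ (l*l) * 1 :=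
            mul_le_mul this h2 (abs_nonneg _) (by positivity)
        _ = l * l := by ring
    have e2 : |(l * Real.exp (-(l*u))) * (deriv T (c u) * (-(1/(n+1))))| ≤ l * C₁ := by
      have hrw : |(l * Real.exp (-(l*u))) * (deriv T (c u) * (-(1/(n+1))))|
          = (l * Real.exp (-(l*u))) * (|deriv T (c u)| * (1/(n+1))) := by
        rw [abs_mul, abs_of_nonneg (show (0:ℝ) ≤ l * Real.exp (-(l*u)) by positivity),
          abs_mul, abs_neg, abs_of_nonneg hinv.le]
      rw [hrw]
      have a1 : l * Real.exp (-(l*u)) ≤ l := by nlinarith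
      have a2 : |deriv T (c u)| * (1/(n+1)) ≤ C₁ := by
        calc |deriv T (c u)| * (1/(n+1)) ≤ C₁ * 1 := mul_le_mul hT1 hinv1 hinv.le hC₁0
          _ = C₁ := by ring
      exact mul_le_mul a1 a2 (by positivity) hl.le
    have e3 : |w0 l u * (deriv (deriv T) (c u) * (-(1/(n+1))) * (-(1/(n+1))))| ≤ C₂ := by
      rw [abs_mul, abs_of_nonneg hw0]
      have : |deriv (deriv T) (c u) * (-(1/(n+1))) * (-(1/(n+1)))| ≤ C₂ := by
        have hrw : |deriv (deriv T) (c u) * (-(1/(n+1))) * (-(1/(n+1)))|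
            = |deriv (deriv T) (c u)| * (1/(n+1)) * (1/(n+1)) := by
          rw [abs_mul, abs_mul, abs_neg, abs_of_nonneg hinv.le]
        rw [hrw]
        calc |deriv (deriv T) (c u)| * (1/(n+1)) * (1/(n+1)) ≤ C₂ * 1 * 1 := by
              apply mul_le_mul _ hinv1 hinv.le (by positivity)
              exact mul_le_mul hT2 hinv1 hinv.le hC₂0
          _ = C₂ := by ring
      calc w0 l u * |deriv (deriv T) (c u) * (-(1/(n+1))) * (-(1/(n+1)))| ≤ 1 * C₂ :=
            mul_le_mul hw1 this (abs_nonneg _) zero_le_one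
        _ = C₂ := by ring
    calc |_| ≤ |(l * (-l) * Real.exp (-(l*u))) * chi n u
        + (l * Real.exp (-(l*u))) * (deriv T (c u) * (-(1/(n+1))))|
        + |(l * Real.exp (-(l*u))) * (deriv T (c u) * (-(1/(n+1))))
          + w0 l u * (deriv (deriv T) (c u) * (-(1/(n+1))) * (-(1/(n+1))))| := abs_add_le _ _
      _ ≤ (l*l + l*C₁) + (l*C₁ + C₂) := by
          gcongr <;> [exact (abs_add_le _ _).trans (by gcongr); exact (abs_add_le _ _).trans (by gcongr)]
      _ ≤ l*l + 2*l*C₁ + C₂ + 1 := by linarith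

end

-- part 4 : abstract MVT product bound
noncomputable section

lemma mvt_bound {h h' : ℝ → ℝ} {L : ℝ}
    (hd : ∀ u, HasDerivAt h (h' u) u)
    (hL : ∀ u ∈ Ici (0:ℝ), |h' u| ≤ L)
    {a b : ℝ} (ha : 0 ≤ a) (hab : a ≤ b) : |h b - h a| ≤ L * (b - a) := by
  have := Convex.norm_image_sub_le_of_norm_hasDerivWithin_le
    (f := h) (f' := h') (s := Ici (0:ℝ)) (C := L)
    (fun u hu => (hd u).hasDerivWithinAt) (fun u hu => hL u hu) (convex_Ici 0)
    (mem_Ici.2 ha) (mem_Ici.2 (ha.trans hab))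
  rw [Real.norm_eq_abs, Real.norm_eq_abs] at this
  rwa [abs_of_nonneg (show (0:ℝ) ≤ b - a by linarith)] at this

/-- key uniform product bound : |h(x+y) - h x - h y| ≤ C min(1,x) min(1,y). -/
lemma key_product_bound {h h' h'' : ℝ → ℝ} {L M : ℝ} (hL0 : 0 < L) (hM0 : 0 < M)
    (hd : ∀ u, HasDerivAt h (h' u) u)
    (hd2 : ∀ u, HasDerivAt h' (h'' u) u)
    (h0 : h 0 = 0) (hb1 : ∀ u ∈ Ici (0:ℝ), |h u| ≤ 1)
    (hL : ∀ u ∈ Ici (0:ℝ), |h' u| ≤ L) (hM : ∀ u ∈ Ici (0:ℝ), |h'' u| ≤ M)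
    {x y : ℝ} (hx : 0 < x) (hy : 0 < y) :
    |h (x+y) - h x - h y| ≤ max 3 (max (2*L) M) * (min 1 x * min 1 y) := by
  set C := max 3 (max (2*L) M) with hC
  have hC3 : (3:ℝ) ≤ C := le_max_left _ _
  have hCL : 2*L ≤ C := (le_max_left _ _).trans (le_max_right _ _)
  have hCM : M ≤ C := (le_max_right _ _).trans (le_max_right _ _)
  -- bound 1 : ≤ 2 L x and ≤ 2 L y
  have b1 : ∀ {x y : ℝ}, 0 < x → 0 < y → |h (x+y) - h x - h y| ≤ 2 * L * x := by
    intro x y hx hy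
    have i1 : |h (x+y) - h y| ≤ L * x := by
      have := mvt_bound hd hL hy.le (by linarith : y ≤ x + y)
      simpa using this
    have i2 : |h x| ≤ L * x := by
      have := mvt_bound hd hL (le_refl (0:ℝ)) hx.le
      simpa [h0] using this
    calc |h (x+y) - h x - h y| = |(h (x+y) - h y) - h x| := by ring_nf
      _ ≤ |h (x+y) - h y| + |h x| := abs_sub _ _
      _ ≤ L * x + L * x := add_le_add i1 i2
      _ = 2 * L * x := by ring
  -- bound 2 : ≤ M x y
  have b2 : |h (x+y) - h x - h y| ≤ M * x * y := by
    set F : ℝ → ℝ := fun u => h (x + u) - h u with hF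
    have hdF : ∀ u, HasDerivAt F (h' (x + u) - h' u) u := by
      intro u
      have h1 : HasDerivAt (fun u : ℝ => h (x + u)) (h' (x + u)) u := by
        have := (hd (x + u)).comp u ((hasDerivAt_id u).const_add x)
        exact this.congr_deriv (by simp)
      exact h1.sub (hd u)
    have hFb : ∀ u ∈ Ici (0:ℝ), |h' (x + u) - h' u| ≤ M * x := by
      intro u hu
      have := mvt_bound hd2 hM (mem_Ici.1 hu) (by linarith : u ≤ x + u)
      calc |h' (x+u) - h' u| ≤ M * (x + u - u) := this
        _ = M * x := by ring
    have := mvt_bound (h := F) (h' := fun u => h' (x + u) - h' u) hdF hFb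
      (le_refl (0:ℝ)) hy.le
    have hFv : F y - F 0 = h (x + y) - h x - h y := by simp [hF, h0]; ring
    calc |h (x+y) - h x - h y| = |F y - F 0| := by rw [hFv]
      _ ≤ (M * x) * (y - 0) := this
      _ = M * x * y := by ring
  -- bound 3 : ≤ 3
  have b3 : |h (x+y) - h x - h y| ≤ 3 := by
    have i1 := hb1 (x+y) (mem_Ici.2 (by linarith))
    have i2 := hb1 x (mem_Ici.2 hx.le)
    have i3 := hb1 y (mem_Ici.2 hy.le)
    calc |h (x+y) - h x - h y| ≤ |h (x+y) - h x| + |h y| := abs_sub _ _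
      _ ≤ |h (x+y)| + |h x| + |h y| := by gcongr; exact abs_sub _ _
      _ ≤ 3 := by linarith
  rcases le_total x 1 with h1 | h1 <;> rcases le_total y 1 with h2 | h2
  · rw [min_eq_right h1, min_eq_right h2]
    calc |h (x+y) - h x - h y| ≤ M * x * y := b2
      _ ≤ C * (x * y) := by nlinarith [mul_nonneg (mul_nonneg (sub_nonneg.2 hCM) hx.le) hy.le]
  · rw [min_eq_right h1, min_eq_left h2]
    calc |h (x+y) - h x - h y| ≤ 2 * L * x := b1 hx hy
      _ ≤ C * (x * 1) := by nlinarith [mul_nonneg (sub_nonneg.2 hCL) hx.le]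
  · rw [min_eq_left h1, min_eq_right h2]
    have hcomm : |h (x+y) - h x - h y| = |h (y+x) - h y - h x| := by ring_nf
    calc |h (x+y) - h x - h y| = |h (y+x) - h y - h x| := hcomm
      _ ≤ 2 * L * y := b1 hy hx
      _ ≤ C * (1 * y) := by nlinarith [mul_nonneg (sub_nonneg.2 hCL) hy.le]
  · rw [min_eq_left h1, min_eq_left h2]
    calc |h (x+y) - h x - h y| ≤ 3 := b3
      _ ≤ C * (1 * 1) := by nlinarith

end

-- part 5 : measure helpers
noncomputable section

namespace CoagAux
open MeasureTheory Set ENNReal Filter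

variable {μ : Measure ℝ}

lemma restrict_Ioi_eq (h0 : μ (Iic 0) = 0) : μ.restrict (Ioi 0) = μ := by
  ext A hA
  rw [Measure.restrict_apply hA]
  have hsplit := measure_inter_add_diff (μ := μ) A (measurableSet_Ioi (a := (0:ℝ)))
  have hdiff : μ (A \ Ioi 0) = 0 := by
    refine measure_mono_null ?_ h0
    intro x hx
    simpa using hx.2
  rw [← hsplit, hdiff, add_zero]

lemma ae_mem_Ioi (h0 : μ (Iic 0) = 0) : ∀ᵐ x ∂μ, x ∈ Ioi (0:ℝ) := by
  rw [ae_iff]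
  refine measure_mono_null ?_ h0
  intro x hx
  simpa using hx

lemma measure_Ioi_lt_top (hm : ∫⁻ x in Ioi (0:ℝ), ENNReal.ofReal x ∂μ ≠ ⊤)
    {ε : ℝ} (hε : 0 < ε) : μ (Ioi ε) < ⊤ := by
  by_contra hc
  push_neg at hc
  have htop : μ (Ioi ε) = ⊤ := top_le_iff.1 hc
  have h1 : ENNReal.ofReal ε * μ (Ioi ε) ≤ ∫⁻ x in Ioi ε, ENNReal.ofReal x ∂μ := by
    rw [← setLIntegral_const (Ioi ε) (ENNReal.ofReal ε)]
    apply setLIntegral_mono (by measurability)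
    intro x hx
    exact ENNReal.ofReal_le_ofReal (le_of_lt hx)
  have h2 : (∫⁻ x in Ioi ε, ENNReal.ofReal x ∂μ) ≤ ∫⁻ x in Ioi (0:ℝ), ENNReal.ofReal x ∂μ :=
    lintegral_mono' (Measure.restrict_mono (Ioi_subset_Ioi hε.le) le_rfl) le_rfl
  rw [htop, ENNReal.mul_top ((ENNReal.ofReal_pos.2 hε).ne')] at h1
  exact hm (top_le_iff.1 (h1.trans h2))

lemma sigmaFinite_of_moment (h0 : μ (Iic 0) = 0)
    (hm : ∫⁻ x in Ioi (0:ℝ), ENNReal.ofReal x ∂μ ≠ ⊤) : SigmaFinite μ := by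
  apply Measure.sigmaFinite_of_countable (S := Set.range (fun k : ℕ => Iic (0:ℝ) ∪ Ioi (1/(k+1))))
    (countable_range _)
  · rintro s ⟨k, rfl⟩
    have h1 : μ (Iic (0:ℝ) ∪ Ioi (1/(k+1:ℝ))) ≤ μ (Iic 0) + μ (Ioi (1/(k+1:ℝ))) :=
      measure_union_le _ _
    have h2 : μ (Ioi (1/(k+1:ℝ))) < ⊤ := measure_Ioi_lt_top hm (by positivity)
    rw [h0, zero_add] at h1
    exact lt_of_le_of_lt h1 h2
  · apply eq_univ_of_forall
    intro x
    rcases le_or_gt x 0 with hx | hx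
    · exact mem_sUnion.2 ⟨_, ⟨0, rfl⟩, Or.inl hx⟩
    · obtain ⟨k, hk⟩ := exists_nat_one_div_lt hx
      exact mem_sUnion.2 ⟨_, ⟨k, rfl⟩, Or.inr hk⟩

lemma integrable_linear (h0 : μ (Iic 0) = 0)
    (hm : ∫⁻ x in Ioi (0:ℝ), ENNReal.ofReal x ∂μ ≠ ⊤) {c : ℝ} (hc : 0 ≤ c) :
    Integrable (fun x => c * x) μ := by
  refine ⟨(continuous_const.mul continuous_id).aestronglyMeasurable, ?_⟩
  rw [hasFiniteIntegral_iff_norm]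
  have key : (∫⁻ x, ENNReal.ofReal ‖c * x‖ ∂μ) = ∫⁻ x in Ioi 0, ENNReal.ofReal ‖c * x‖ ∂μ := by
    conv_lhs => rw [← restrict_Ioi_eq h0]
  rw [key]
  have h1 : (∫⁻ x in Ioi (0:ℝ), ENNReal.ofReal ‖c * x‖ ∂μ)
      = ∫⁻ x in Ioi (0:ℝ), ENNReal.ofReal c * ENNReal.ofReal x ∂μ := by
    apply setLIntegral_congr_fun measurableSet_Ioi
    intro x hx
    dsimp only
    rw [Real.norm_eq_abs, abs_of_nonneg (mul_nonneg hc (le_of_lt hx)), ENNReal.ofReal_mul hc]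
  rw [h1, lintegral_const_mul' _ _ (by simp)]
  exact ENNReal.mul_lt_top (by simp) (lt_top_iff_ne_top.2 hm)

lemma integrable_of_le_linear (h0 : μ (Iic 0) = 0)
    (hm : ∫⁻ x in Ioi (0:ℝ), ENNReal.ofReal x ∂μ ≠ ⊤) {g : ℝ → ℝ}
    (hgm : AEStronglyMeasurable g μ) {c : ℝ} (hc : 0 ≤ c)
    (hb : ∀ x ∈ Ioi (0:ℝ), |g x| ≤ c * x) : Integrable g μ := by
  apply (integrable_linear h0 hm hc).mono' hgm
  filter_upwards [ae_mem_Ioi h0] with x hx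
  simpa using hb x hx

end CoagAux

end

-- part 6 : the mass test function and mass bound
noncomputable section
namespace CoagAux
open MeasureTheory Set ENNReal Filter
local notation "T" => Real.smoothTransition

def phiM (n : ℕ) : ℝ → ℝ := fun x => chi n x * T (x + 2)

lemma phiM_contDiff (n : ℕ) : ContDiff ℝ 1 (phiM n) :=
  (chi_contDiff n).mul ((Real.smoothTransition.contDiff (n := 1)).comp
    (contDiff_id.add contDiff_const))

lemma phiM_compactSupport (n : ℕ) : HasCompactSupport (phiM n) := by
  apply HasCompactSupport.intro (isCompact_Icc (a := (-2:ℝ)) (b := 2*(n+1)))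
  intro x hx
  simp only [mem_Icc, not_and_or, not_le] at hx
  rcases hx with hx | hx
  · have : T (x + 2) = 0 := Real.smoothTransition.zero_of_nonpos (by linarith)
    simp [phiM, this]
  · have : chi n x = 0 := chi_eq_zero n (by linarith)
    simp [phiM, this]

lemma phiM_zero (n : ℕ) : phiM n 0 = 1 := by
  have h1 : chi n 0 = 1 := chi_eq_one n (by positivity)
  have h2 : T (2:ℝ) = 1 := Real.smoothTransition.one_of_one_le (by norm_num)
  simpa [phiM, h1] using h2

lemma phiM_eq_chi (n : ℕ) {x : ℝ} (hx : 0 ≤ x) : phiM n x = chi n x := by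
  have h2 : T (x + 2) = 1 := Real.smoothTransition.one_of_one_le (by linarith)
  simp [phiM, h2]

lemma phiM_nonneg (n : ℕ) (x : ℝ) : 0 ≤ phiM n x :=
  mul_nonneg (chi_nonneg n x) (Real.smoothTransition.nonneg _)

lemma phiM_le_one (n : ℕ) (x : ℝ) : phiM n x ≤ 1 := by
  have := mul_le_mul (chi_le_one n x) (Real.smoothTransition.le_one (x+2))
    (Real.smoothTransition.nonneg (x+2)) zero_le_one
  simpa [phiM] using this

lemma phiM_subadd (n : ℕ) {x y : ℝ} (hx : 0 < x) (hy : 0 < y) :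
    (x + y) * phiM n (x + y) - x * phiM n x - y * phiM n y ≤ 0 := by
  rw [phiM_eq_chi n (by linarith), phiM_eq_chi n hx.le, phiM_eq_chi n hy.le]
  have h1 : chi n (x + y) ≤ chi n x := chi_antitone n x (x+y) (by linarith)
  have h2 : chi n (x + y) ≤ chi n y := chi_antitone n y (x+y) (by linarith)
  have e : (x + y) * chi n (x+y) = x * chi n (x+y) + y * chi n (x+y) := by ring
  have i1 : x * chi n (x+y) ≤ x * chi n x := by nlinarith
  have i2 : y * chi n (x+y) ≤ y * chi n y := by nlinarith
  linarith

lemma mass_bound (f : ℝ → Measure ℝ)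
    (hmom : ∀ t ≥ (0:ℝ), (∫⁻ x in Ioi (0:ℝ), ENNReal.ofReal x ∂(f t)) < ∞)
    (heq : ∀ φ : ℝ → ℝ, ContDiff ℝ 1 φ → HasCompactSupport φ →
      ∀ t ≥ (0:ℝ),
        (∫ x in Ioi (0:ℝ), x * φ x ∂(f t))
          = (∫ s in (0:ℝ)..t,
              ∫ p in (Ioi (0:ℝ)) ×ˢ (Ioi (0:ℝ)),
                ((p.1 + p.2) * φ (p.1 + p.2) - p.1 * φ p.1 - p.2 * φ p.2)
                  ∂((f s).prod (f s)))
            + t * φ 0) :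
    ∀ t ≥ (0:ℝ), (∫⁻ x in Ioi (0:ℝ), ENNReal.ofReal x ∂(f t)) ≤ ENNReal.ofReal t := by
  intro t ht
  -- step 1 : each truncated integral is at most t
  have step1 : ∀ n : ℕ, (∫ x in Ioi (0:ℝ), x * phiM n x ∂(f t)) ≤ t := by
    intro n
    have hE := heq (phiM n) (phiM_contDiff n) (phiM_compactSupport n) t ht
    set Λ : ℝ → ℝ := fun s => ∫ p in (Ioi (0:ℝ)) ×ˢ (Ioi (0:ℝ)),
      ((p.1 + p.2) * phiM n (p.1 + p.2) - p.1 * phiM n p.1 - p.2 * phiM n p.2)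
        ∂((f s).prod (f s)) with hΛdef
    have hΛ : ∀ s, Λ s ≤ 0 := by
      intro s
      apply setIntegral_nonpos ((measurableSet_Ioi (a := (0:ℝ))).prod measurableSet_Ioi)
      rintro ⟨x, y⟩ ⟨hx, hy⟩
      exact phiM_subadd n hx hy
    have hIneq : (∫ s in (0:ℝ)..t, Λ s) ≤ 0 := by
      by_cases hint : IntervalIntegrable Λ volume 0 t
      · rw [intervalIntegral.integral_of_le ht]
        apply setIntegral_nonpos measurableSet_Ioc
        intro s _
        exact hΛ s
      · rw [intervalIntegral.integral_undef hint]
    rw [hE, phiM_zero, mul_one]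
    linarith
  -- step 2 : relate to lintegral
  have hresμ : ((f t).restrict (Ioi 0)) (Iic 0) = 0 := by
    rw [Measure.restrict_apply measurableSet_Iic]
    have hie : Iic (0:ℝ) ∩ Ioi 0 = ∅ := by
      ext x
      simp only [mem_inter_iff, mem_Iic, mem_Ioi, mem_empty_iff_false, iff_false, not_and, not_lt]
      intro h; exact h
    rw [hie, measure_empty]
  have hmomr : (∫⁻ x in Ioi (0:ℝ), ENNReal.ofReal x ∂((f t).restrict (Ioi 0))) ≠ ⊤ := by
    rw [Measure.restrict_restrict measurableSet_Ioi, inter_self]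
    exact (hmom t ht).ne
  have step2 : ∀ n : ℕ, (∫⁻ x in Ioi (0:ℝ), ENNReal.ofReal (x * phiM n x) ∂(f t))
      ≤ ENNReal.ofReal t := by
    intro n
    have hint : Integrable (fun x => x * phiM n x) ((f t).restrict (Ioi 0)) := by
      have hcg : AEStronglyMeasurable (fun x : ℝ => x * phiM n x) ((f t).restrict (Ioi 0)) := by
        apply Continuous.aestronglyMeasurable
        exact continuous_id.mul (phiM_contDiff n).continuous
      apply integrable_of_le_linear hresμ hmomr hcg zero_le_one
      intro x hx
      rw [abs_of_nonneg (mul_nonneg (le_of_lt hx) (phiM_nonneg n x)), one_mul]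
      calc x * phiM n x ≤ x * 1 := by
            have hx' : (0:ℝ) < x := hx
            nlinarith [phiM_le_one n x, phiM_nonneg n x]
        _ = x := by ring
    have hnn : 0 ≤ᶠ[ae ((f t).restrict (Ioi 0))] (fun x => x * phiM n x) := by
      filter_upwards [ae_mem_Ioi hresμ] with x hx
      exact mul_nonneg (le_of_lt hx) (phiM_nonneg n x)
    have := ofReal_integral_eq_lintegral_ofReal hint hnn
    rw [← this]
    exact ENNReal.ofReal_le_ofReal (step1 n)
  -- step 3 : Fatou
  have key : ∀ x ∈ Ioi (0:ℝ), Tendsto (fun n : ℕ => ENNReal.ofReal (x * phiM n x)) atTop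
      (nhds (ENNReal.ofReal x)) := by
    intro x hx
    apply tendsto_atTop_of_eventually_const (i₀ := ⌈x⌉₊)
    intro n hn
    have h1 : phiM n x = 1 := by
      rw [phiM_eq_chi n (le_of_lt hx)]
      apply chi_eq_one
      calc x ≤ ⌈x⌉₊ := Nat.le_ceil x
        _ ≤ (n : ℝ) := by exact_mod_cast hn
        _ ≤ n + 1 := by linarith
    rw [h1, mul_one]
  have hcongr : (∫⁻ x in Ioi (0:ℝ), ENNReal.ofReal x ∂(f t))
      = ∫⁻ x in Ioi (0:ℝ), liminf (fun n : ℕ => ENNReal.ofReal (x * phiM n x)) atTop ∂(f t) := by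
    apply setLIntegral_congr_fun measurableSet_Ioi
    intro x hx
    exact ((key x hx).liminf_eq).symm
  rw [hcongr]
  calc (∫⁻ x in Ioi (0:ℝ), liminf (fun n : ℕ => ENNReal.ofReal (x * phiM n x)) atTop ∂(f t))
      ≤ liminf (fun n : ℕ => ∫⁻ x in Ioi (0:ℝ), ENNReal.ofReal (x * phiM n x) ∂(f t)) atTop := by
        apply lintegral_liminf_le
        intro n
        apply Measurable.ennreal_ofReal
        exact (continuous_id.mul (phiM_contDiff n).continuous).measurable
    _ ≤ ENNReal.ofReal t := by
        apply Filter.liminf_le_of_frequently_le'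
        apply Filter.Frequently.of_forall
        exact step2

end CoagAux
end

-- part 7 : Bernstein transform basics
noncomputable section
namespace CoagAux
open MeasureTheory Set ENNReal Filter

def Btr (f : ℝ → Measure ℝ) (l : ℝ) (s : ℝ) : ℝ :=
  (∫⁻ x in Ioi (0:ℝ), ENNReal.ofReal (1 - Real.exp (-(l * x))) ∂(f s)).toReal

lemma w0_nonneg {l x : ℝ} (hl : 0 ≤ l) (hx : 0 ≤ x) : 0 ≤ w0 l x := by
  simp only [w0, sub_nonneg]
  exact Real.exp_le_one_iff.2 (by nlinarith)

lemma w0_le_one {l x : ℝ} : w0 l x ≤ 1 := by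
  simp only [w0, sub_le_self_iff]
  positivity

lemma w0_le_linear {l x : ℝ} : w0 l x ≤ l * x := by
  simp only [w0]
  have := Real.add_one_le_exp (-(l*x))
  linarith

lemma w0_lt_linear {l x : ℝ} (hl : 0 < l) (hx : 0 < x) : w0 l x < l * x := by
  simp only [w0]
  have := Real.add_one_lt_exp (x := -(l*x)) (by nlinarith)
  linarith

lemma w0_add_eq (l x y : ℝ) : w0 l (x + y) - w0 l x - w0 l y = -(w0 l x * w0 l y) := by
  simp only [w0]
  have : -(l * (x + y)) = -(l*x) + -(l*y) := by ring
  rw [this, Real.exp_add]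
  ring

lemma meas_ofReal_lin (l : ℝ) : Measurable fun x : ℝ => ENNReal.ofReal (l * x) :=
  (measurable_id.const_mul l).ennreal_ofReal

lemma meas_ofReal_w0 (l : ℝ) :
    Measurable fun x : ℝ => ENNReal.ofReal (1 - Real.exp (-(l * x))) := by
  apply Measurable.ennreal_ofReal
  exact measurable_const.sub (Real.measurable_exp.comp ((measurable_id.const_mul l).neg))

variable {f : ℝ → Measure ℝ} {l : ℝ}

/-- the lintegral defining `Btr` is finite, bounded by `ofReal (l s)`. -/
lemma Btr_lintegral_le (hl : 0 < l) {s : ℝ} (hs : 0 ≤ s)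
    (hmass : (∫⁻ x in Ioi (0:ℝ), ENNReal.ofReal x ∂(f s)) ≤ ENNReal.ofReal s) :
    (∫⁻ x in Ioi (0:ℝ), ENNReal.ofReal (1 - Real.exp (-(l * x))) ∂(f s))
      ≤ ENNReal.ofReal (l * s) := by
  have h1 : (∫⁻ x in Ioi (0:ℝ), ENNReal.ofReal (1 - Real.exp (-(l * x))) ∂(f s))
      ≤ ∫⁻ x in Ioi (0:ℝ), ENNReal.ofReal l * ENNReal.ofReal x ∂(f s) := by
    apply setLIntegral_mono (by measurability)
    intro x hx
    rw [← ENNReal.ofReal_mul hl.le]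
    exact ENNReal.ofReal_le_ofReal w0_le_linear
  calc (∫⁻ x in Ioi (0:ℝ), ENNReal.ofReal (1 - Real.exp (-(l * x))) ∂(f s))
      ≤ ∫⁻ x in Ioi (0:ℝ), ENNReal.ofReal l * ENNReal.ofReal x ∂(f s) := h1
    _ = ENNReal.ofReal l * ∫⁻ x in Ioi (0:ℝ), ENNReal.ofReal x ∂(f s) := by
        rw [lintegral_const_mul' _ _ (by simp)]
    _ ≤ ENNReal.ofReal l * ENNReal.ofReal s := by gcongr
    _ = ENNReal.ofReal (l * s) := by rw [← ENNReal.ofReal_mul hl.le]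

lemma Btr_nonneg (s : ℝ) : 0 ≤ Btr f l s := ENNReal.toReal_nonneg

lemma Btr_le (hl : 0 < l) {s : ℝ} (hs : 0 ≤ s)
    (hmass : (∫⁻ x in Ioi (0:ℝ), ENNReal.ofReal x ∂(f s)) ≤ ENNReal.ofReal s) :
    Btr f l s ≤ l * s := by
  have := Btr_lintegral_le (f := f) hl hs hmass
  exact ENNReal.toReal_le_of_le_ofReal (by positivity) this

/-- Bochner integral of `w0 l` equals `Btr`. -/
lemma Btr_eq_integral (hl : 0 < l) {s : ℝ} (h0 : (f s) (Iic 0) = 0) :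
    (∫ x, w0 l x ∂(f s)) = Btr f l s := by
  have hnn : 0 ≤ᶠ[ae (f s)] w0 l := by
    filter_upwards [ae_mem_Ioi h0] with x hx
    exact w0_nonneg hl.le (le_of_lt hx)
  have hm : AEStronglyMeasurable (w0 l) (f s) := by
    apply Continuous.aestronglyMeasurable
    exact continuous_const.sub ((continuous_const.mul continuous_id).neg.rexp)
  rw [integral_eq_lintegral_of_nonneg_ae hnn hm, Btr]
  congr 1
  conv_lhs => rw [← restrict_Ioi_eq h0]
  rfl

lemma Integrable_w0 (hl : 0 < l) {s : ℝ} (h0 : (f s) (Iic 0) = 0)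
    (hmom : (∫⁻ x in Ioi (0:ℝ), ENNReal.ofReal x ∂(f s)) ≠ ⊤) :
    Integrable (w0 l) (f s) := by
  apply integrable_of_le_linear h0 hmom ?_ hl.le
  · intro x hx
    rw [abs_of_nonneg (w0_nonneg hl.le (le_of_lt hx))]
    exact w0_le_linear
  · apply Continuous.aestronglyMeasurable
    exact continuous_const.sub ((continuous_const.mul continuous_id).neg.rexp)

/-- strict inequality : `Btr f l t ≠ t * l` for `t > 0`. -/
lemma Btr_ne (hl : 0 < l) {t : ℝ} (ht : 0 < t) (h0 : (f t) (Iic 0) = 0)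
    (hmass : (∫⁻ x in Ioi (0:ℝ), ENNReal.ofReal x ∂(f t)) ≤ ENNReal.ofReal t) :
    Btr f l t ≠ t * l := by
  intro hEq
  set I1 := ∫⁻ x in Ioi (0:ℝ), ENNReal.ofReal (1 - Real.exp (-(l * x))) ∂(f t) with hI1
  set I2 := ∫⁻ x in Ioi (0:ℝ), ENNReal.ofReal (l * x) ∂(f t) with hI2
  have hI2top : I2 ≤ ENNReal.ofReal (l * t) := by
    rw [hI2]
    calc (∫⁻ x in Ioi (0:ℝ), ENNReal.ofReal (l * x) ∂(f t))
        = ∫⁻ x in Ioi (0:ℝ), ENNReal.ofReal l * ENNReal.ofReal x ∂(f t) := by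
          apply setLIntegral_congr_fun measurableSet_Ioi ?_
          intro x hx
          dsimp only
          rw [ENNReal.ofReal_mul hl.le]
      _ = ENNReal.ofReal l * ∫⁻ x in Ioi (0:ℝ), ENNReal.ofReal x ∂(f t) := by
          rw [lintegral_const_mul' _ _ (by simp)]
      _ ≤ ENNReal.ofReal l * ENNReal.ofReal t := by gcongr
      _ = ENNReal.ofReal (l * t) := by rw [← ENNReal.ofReal_mul hl.le]
  have hI12 : I1 ≤ I2 := by
    apply setLIntegral_mono (meas_ofReal_lin l)
    intro x hx
    exact ENNReal.ofReal_le_ofReal w0_le_linear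
  have hI1top : I1 ≠ ⊤ := (lt_of_le_of_lt (hI12.trans hI2top) (by simp)).ne
  have hI1val : I1 = ENNReal.ofReal (l * t) := by
    have := ENNReal.ofReal_toReal hI1top
    rw [← this]
    rw [show I1.toReal = Btr f l t from rfl, hEq]
    ring_nf
  have hI2val : I2 = ENNReal.ofReal (l * t) := le_antisymm hI2top (hI1val ▸ hI12)
  -- subtract
  have hsub : (∫⁻ x in Ioi (0:ℝ), (ENNReal.ofReal (l * x)
      - ENNReal.ofReal (1 - Real.exp (-(l * x)))) ∂(f t)) = 0 := by
    rw [lintegral_sub (meas_ofReal_w0 l) (hI1val ▸ hI1top : I1 ≠ ⊤)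
      (ae_of_all _ (fun x => ENNReal.ofReal_le_ofReal w0_le_linear)), ← hI1, ← hI2,
      hI1val, hI2val, tsub_self]
  have hzero := (lintegral_eq_zero_iff ((meas_ofReal_lin l).sub (meas_ofReal_w0 l))).1 hsub
  -- but the integrand is positive on Ioi 0
  have hIoi : (f t) (Ioi (0:ℝ)) = 0 := by
    have hae := hzero
    rw [Filter.EventuallyEq, ae_restrict_iff' measurableSet_Ioi] at hae
    rw [ae_iff] at hae
    have hsubset : Ioi (0:ℝ) ⊆ {x | ¬ (x ∈ Ioi (0:ℝ) →
        (ENNReal.ofReal (l * x) - ENNReal.ofReal (1 - Real.exp (-(l * x)))) = (0:ℝ≥0∞))} := by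
      intro x hx
      simp only [mem_setOf_eq, not_forall]
      refine ⟨hx, ?_⟩
      rw [tsub_eq_zero_iff_le]
      intro hle
      have h1 : ENNReal.ofReal (1 - Real.exp (-(l * x))) < ENNReal.ofReal (l * x) :=
        ENNReal.ofReal_lt_ofReal_iff (by nlinarith [mem_Ioi.1 hx]) |>.2
          (w0_lt_linear hl (mem_Ioi.1 hx))
      exact absurd hle (not_le.2 h1)
    exact measure_mono_null hsubset hae
  have : I1 = 0 := by
    rw [hI1]
    have : (f t).restrict (Ioi 0) = 0 := Measure.restrict_eq_zero.2 hIoi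
    rw [this]
    simp
  rw [this] at hI1val
  have : l * t ≤ 0 := by
    by_contra hc
    push_neg at hc
    exact absurd hI1val.symm (by simp [ENNReal.ofReal_eq_zero, not_le, hc])
  nlinarith

end CoagAux
end

-- part 8 : the integral equation for the Bernstein transform
noncomputable section
namespace CoagAux
open MeasureTheory Set ENNReal Filter
local notation "T" => Real.smoothTransition

def dmin : ℝ → ℝ := fun x => min 1 x

lemma dmin_continuous : Continuous dmin := continuous_const.min continuous_id

lemma w0_continuous (l : ℝ) : Continuous (w0 l) :=
  continuous_const.sub ((continuous_const.mul continuous_id).neg.rexp)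

lemma hfun_continuous (l : ℝ) (n : ℕ) : Continuous (hfun l n) :=
  (w0_continuous l).mul (chi_contDiff n).continuous

lemma bernstein_eq (f : ℝ → Measure ℝ)
    (hpos : ∀ t ≥ (0:ℝ), (f t) (Iic 0) = 0)
    (hmom : ∀ t ≥ (0:ℝ), (∫⁻ x in Ioi (0:ℝ), ENNReal.ofReal x ∂(f t)) < ∞)
    (heq : ∀ φ : ℝ → ℝ, ContDiff ℝ 1 φ → HasCompactSupport φ →
      ∀ t ≥ (0:ℝ),
        (∫ x in Ioi (0:ℝ), x * φ x ∂(f t))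
          = (∫ s in (0:ℝ)..t,
              ∫ p in (Ioi (0:ℝ)) ×ˢ (Ioi (0:ℝ)),
                ((p.1 + p.2) * φ (p.1 + p.2) - p.1 * φ p.1 - p.2 * φ p.2)
                  ∂((f s).prod (f s)))
            + t * φ 0)
    {l : ℝ} (hl : 0 < l) {t : ℝ} (ht : 0 < t) :
    AEStronglyMeasurable (fun s => (Btr f l s)^2) (volume.restrict (Ioc 0 t)) ∧
      Btr f l t = l * t - ∫ s in (0:ℝ)..t, (Btr f l s)^2 := by
  have hmass := mass_bound f hmom heq
  obtain ⟨L, M, hL0, hM0, hder⟩ := hfun_derivs l hl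
  set C := max 3 (max (2*L) M) with hCdef
  have hC0 : (0:ℝ) < C := lt_of_lt_of_le (by norm_num) (le_max_left _ _)
  -- the test functions
  set φ : ℕ → ℝ → ℝ :=
    fun n x => dslope (w0 l) 0 x * (chi n x * T (x + 2)) with hφdef
  have hφc : ∀ n, ContDiff ℝ 1 (φ n) := by
    intro n
    exact (contDiff_dslope_w0 l).mul ((chi_contDiff n).mul
      ((Real.smoothTransition.contDiff (n := 1)).comp (contDiff_id.add contDiff_const)))
  have hφs : ∀ n, HasCompactSupport (φ n) := by
    intro n
    apply HasCompactSupport.intro (isCompact_Icc (a := (-2:ℝ)) (b := 2*(n+1)))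
    intro x hx
    simp only [mem_Icc, not_and_or, not_le] at hx
    rcases hx with hx | hx
    · have : T (x + 2) = 0 := Real.smoothTransition.zero_of_nonpos (by linarith)
      simp [hφdef, this]
    · have : chi n x = 0 := chi_eq_zero n (by linarith)
      simp [hφdef, this]
  have hφ0 : ∀ n, φ n 0 = l := by
    intro n
    have h1 : chi n 0 = 1 := chi_eq_one n (by positivity)
    have h2 : T (2:ℝ) = 1 := Real.smoothTransition.one_of_one_le (by norm_num)
    have h3 : dslope (w0 l) 0 0 = l := dslope_w0_at_zero l
    show dslope (w0 l) 0 0 * (chi n 0 * T ((0:ℝ) + 2)) = l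
    rw [h1, h3, show ((0:ℝ)+2) = (2:ℝ) by norm_num, h2]
    ring
  have hxφ : ∀ n, ∀ x : ℝ, 0 < x → x * φ n x = hfun l n x := by
    intro n x hx
    have h2 : T (x + 2) = 1 := Real.smoothTransition.one_of_one_le (by linarith)
    simp only [hφdef, h2, mul_one]
    rw [show x * (dslope (w0 l) 0 x * chi n x) = (x * dslope (w0 l) 0 x) * chi n x by ring,
      dslope_w0_at_pos l x hx.ne', hfun]
  -- the product integrand
  set g : ℕ → ℝ × ℝ → ℝ :=
    fun n p => hfun l n (p.1 + p.2) - hfun l n p.1 - hfun l n p.2 with hgdef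
  set D : ℝ × ℝ → ℝ := fun p => (C * dmin p.1) * dmin p.2 with hDdef
  have hgn_bound : ∀ n, ∀ p : ℝ × ℝ, p ∈ (Ioi (0:ℝ)) ×ˢ (Ioi (0:ℝ)) → |g n p| ≤ D p := by
    intro n p hp
    obtain ⟨h', h'', hd1, hd2, hb1, hb2⟩ := hder n
    have := key_product_bound hL0 hM0 hd1 hd2 (hfun_zero l n)
      (fun u hu => hfun_abs_le_one l hl n (mem_Ici.1 hu)) hb1 hb2 hp.1 hp.2
    calc |g n p| ≤ C * (min 1 p.1 * min 1 p.2) := this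
      _ = D p := by rw [hDdef]; simp only [dmin]; ring
  -- σ-finiteness and basic integrability, for each s ≥ 0
  have hdm : ∀ s, 0 ≤ s → Integrable dmin (f s) := by
    intro s hs
    apply integrable_of_le_linear (hpos s hs) (hmom s hs).ne
      (dmin_continuous.aestronglyMeasurable) zero_le_one
    intro x hx
    have hx' : (0:ℝ) < x := hx
    simp only [dmin]
    rw [abs_of_nonneg (le_min zero_le_one hx'.le), one_mul]
    exact min_le_right _ _
  have hdmin_val : ∀ s, 0 ≤ s → 0 ≤ (∫ x, dmin x ∂(f s)) ∧ (∫ x, dmin x ∂(f s)) ≤ s := by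
    intro s hs
    have hnn : 0 ≤ᶠ[ae (f s)] dmin := by
      filter_upwards [ae_mem_Ioi (hpos s hs)] with x hx
      exact le_min zero_le_one (le_of_lt hx)
    have hnn' := hnn
    constructor
    · exact integral_nonneg_of_ae hnn
    · rw [integral_eq_lintegral_of_nonneg_ae hnn dmin_continuous.aestronglyMeasurable]
      apply ENNReal.toReal_le_of_le_ofReal hs
      have h1 : (∫⁻ a, ENNReal.ofReal (dmin a) ∂(f s))
          = ∫⁻ a in Ioi 0, ENNReal.ofReal (dmin a) ∂(f s) := by
        conv_lhs => rw [← restrict_Ioi_eq (hpos s hs)]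
      rw [h1]
      calc (∫⁻ a in Ioi (0:ℝ), ENNReal.ofReal (dmin a) ∂(f s))
          ≤ ∫⁻ a in Ioi (0:ℝ), ENNReal.ofReal a ∂(f s) := by
            apply setLIntegral_mono (measurable_id.ennreal_ofReal)
            intro x hx
            exact ENNReal.ofReal_le_ofReal (min_le_right _ _)
        _ ≤ ENNReal.ofReal s := hmass s hs
  -- a.e. membership in the positive quadrant for the product measure
  have hprodres : ∀ s, 0 ≤ s → SigmaFinite (f s) := by
    intro s hs
    exact sigmaFinite_of_moment (hpos s hs) (hmom s hs).ne
  have hprod_eq : ∀ s, 0 ≤ s →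
      ((f s).prod (f s)).restrict ((Ioi (0:ℝ)) ×ˢ (Ioi (0:ℝ))) = (f s).prod (f s) := by
    intro s hs
    haveI := hprodres s hs
    conv_rhs => rw [← restrict_Ioi_eq (hpos s hs)]
    rw [← Measure.prod_restrict, restrict_Ioi_eq (hpos s hs)]
  have hprod_ae : ∀ s, 0 ≤ s →
      ∀ᵐ p ∂((f s).prod (f s)), p ∈ (Ioi (0:ℝ)) ×ˢ (Ioi (0:ℝ)) := by
    intro s hs
    rw [ae_iff]
    have h1 : {p : ℝ × ℝ | ¬ p ∈ (Ioi (0:ℝ)) ×ˢ (Ioi (0:ℝ))}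
        = ((Ioi (0:ℝ)) ×ˢ (Ioi (0:ℝ)))ᶜ := rfl
    rw [h1, ← hprod_eq s hs,
      Measure.restrict_apply (measurableSet_Ioi.prod measurableSet_Ioi).compl,
      compl_inter_self, measure_empty]
  have hD_int : ∀ s, 0 ≤ s → Integrable D ((f s).prod (f s)) := by
    intro s hs
    haveI := hprodres s hs
    exact ((hdm s hs).const_mul C).mul_prod (hdm s hs)
  have hgn_int : ∀ n, ∀ s, 0 ≤ s → Integrable (g n) ((f s).prod (f s)) := by
    intro n s hs
    apply (hD_int s hs).mono'
    · apply Continuous.aestronglyMeasurable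
      exact ((hfun_continuous l n).comp (continuous_fst.add continuous_snd)).sub
        ((hfun_continuous l n).comp continuous_fst) |>.sub
        ((hfun_continuous l n).comp continuous_snd)
    · filter_upwards [hprod_ae s hs] with p hp
      exact hgn_bound n p hp
  -- the literal time integrand and its identification
  set Λ : ℕ → ℝ → ℝ := fun n s => ∫ p in (Ioi (0:ℝ)) ×ˢ (Ioi (0:ℝ)),
    ((p.1 + p.2) * φ n (p.1 + p.2) - p.1 * φ n p.1 - p.2 * φ n p.2)
      ∂((f s).prod (f s)) with hΛdef
  have hΛeq : ∀ n, ∀ s, 0 ≤ s → Λ n s = ∫ p, g n p ∂((f s).prod (f s)) := by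
    intro n s hs
    have h1 : Λ n s = ∫ p in (Ioi (0:ℝ)) ×ˢ (Ioi (0:ℝ)), g n p ∂((f s).prod (f s)) := by
      apply setIntegral_congr_fun (measurableSet_Ioi.prod measurableSet_Ioi)
      rintro ⟨x, y⟩ ⟨hx, hy⟩
      have hx' : (0:ℝ) < x := hx
      have hy' : (0:ℝ) < y := hy
      simp only [hgdef]
      rw [← hxφ n x hx', ← hxφ n y hy', ← hxφ n (x+y) (by linarith)]
    rw [h1]
    rw [show (((f s).prod (f s)).restrict ((Ioi (0:ℝ)) ×ˢ (Ioi (0:ℝ)))) = (f s).prod (f s)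
      from hprod_eq s hs]
  -- uniform bound on Λ
  have hΛbd : ∀ n, ∀ s, 0 ≤ s → s ≤ t → |Λ n s| ≤ C * t * t := by
    intro n s hs hst
    haveI := hprodres s hs
    rw [hΛeq n s hs]
    have h1 : ‖∫ p, g n p ∂((f s).prod (f s))‖ ≤ ∫ p, D p ∂((f s).prod (f s)) := by
      apply norm_integral_le_of_norm_le (hD_int s hs)
      filter_upwards [hprod_ae s hs] with p hp
      rw [Real.norm_eq_abs]
      exact hgn_bound n p hp
    have h2 : (∫ p, D p ∂((f s).prod (f s)))
        = (∫ x, C * dmin x ∂(f s)) * (∫ x, dmin x ∂(f s)) :=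
      integral_prod_mul (μ := f s) (ν := f s) (fun x => C * dmin x) dmin
    have h3 := hdmin_val s hs
    rw [Real.norm_eq_abs] at h1
    calc |∫ p, g n p ∂((f s).prod (f s))| ≤ ∫ p, D p ∂((f s).prod (f s)) := h1
      _ = C * ((∫ x, dmin x ∂(f s)) * (∫ x, dmin x ∂(f s))) := by
          rw [h2, MeasureTheory.integral_const_mul]; ring
      _ ≤ C * (t * t) := by
          apply mul_le_mul_of_nonneg_left _ hC0.le
          apply mul_le_mul (h3.2.trans hst) (h3.2.trans hst) h3.1 (by linarith)
      _ = C * t * t := by ring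
  -- pointwise (in s) convergence of Λ
  have hhh : ∀ u : ℝ, 0 < u → Tendsto (fun n : ℕ => hfun l n u) atTop (nhds (w0 l u)) := by
    intro u hu
    apply tendsto_atTop_of_eventually_const (i₀ := ⌈u⌉₊)
    intro n hn
    have h1 : chi n u = 1 := by
      apply chi_eq_one
      calc u ≤ ⌈u⌉₊ := Nat.le_ceil u
        _ ≤ (n:ℝ) := by exact_mod_cast hn
        _ ≤ n + 1 := by linarith
    rw [hfun, h1, mul_one]
  have hΛlim : ∀ s, 0 ≤ s →
      Tendsto (fun n : ℕ => Λ n s) atTop (nhds (-(Btr f l s)^2)) := by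
    intro s hs
    haveI := hprodres s hs
    have hfn : (fun n : ℕ => Λ n s) = fun n => ∫ p, g n p ∂((f s).prod (f s)) := by
      funext n; exact hΛeq n s hs
    rw [hfn]
    have hIw : Integrable (w0 l) (f s) := Integrable_w0 hl (hpos s hs) (hmom s hs).ne
    have hlim := tendsto_integral_of_dominated_convergence (μ := (f s).prod (f s))
      (F := fun n => g n) (f := fun p => -(w0 l p.1 * w0 l p.2)) D
      (fun n => (((hfun_continuous l n).comp (continuous_fst.add continuous_snd)).sub
        ((hfun_continuous l n).comp continuous_fst) |>.sub
        ((hfun_continuous l n).comp continuous_snd)).aestronglyMeasurable)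
      (hD_int s hs)
      (fun n => by
        filter_upwards [hprod_ae s hs] with p hp
        rw [Real.norm_eq_abs]
        exact hgn_bound n p hp)
      (by
        filter_upwards [hprod_ae s hs] with p hp
        have h1 := hhh p.1 hp.1
        have h2 := hhh p.2 hp.2
        have h3 := hhh (p.1 + p.2) (by have := mem_Ioi.1 hp.1; have := mem_Ioi.1 hp.2; linarith)
        have := (h3.sub h1).sub h2
        rw [w0_add_eq] at this
        exact this)
    have hval : (∫ p, -(w0 l p.1 * w0 l p.2) ∂((f s).prod (f s))) = -(Btr f l s)^2 := by
      rw [integral_neg, integral_prod_mul (μ := f s) (ν := f s) (w0 l) (w0 l),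
        Btr_eq_integral hl (hpos s hs), sq]
    rw [hval] at hlim
    exact hlim
  -- the heq identity, rewritten
  have hA : ∀ n, (∫ x in Ioi (0:ℝ), x * φ n x ∂(f t)) = ∫ x, hfun l n x ∂(f t) := by
    intro n
    have h1 : (∫ x in Ioi (0:ℝ), x * φ n x ∂(f t))
        = ∫ x in Ioi (0:ℝ), hfun l n x ∂(f t) := by
      apply setIntegral_congr_fun measurableSet_Ioi
      intro x hx
      exact hxφ n x hx
    rw [h1]
    rw [show ((f t).restrict (Ioi 0)) = f t from restrict_Ioi_eq (hpos t ht.le)]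
  have hEQ : ∀ n, (∫ x, hfun l n x ∂(f t)) = (∫ s in (0:ℝ)..t, Λ n s) + t * l := by
    intro n
    rw [← hA n, heq (φ n) (hφc n) (hφs n) t ht.le, hφ0 n]
  -- convergence of the left-hand sides
  have hAn : Tendsto (fun n : ℕ => ∫ x, hfun l n x ∂(f t)) atTop (nhds (Btr f l t)) := by
    have hIl : Integrable (fun x : ℝ => l * |x|) (f t) := by
      apply integrable_of_le_linear (hpos t ht.le) (hmom t ht.le).ne
        ((continuous_const.mul continuous_abs).aestronglyMeasurable) hl.le
      intro x hx
      have hx' : (0:ℝ) < x := hx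
      simp only [Pi.mul_apply]
      rw [abs_of_nonneg (mul_nonneg hl.le (abs_nonneg x)), abs_of_nonneg hx'.le]
    have hlim := tendsto_integral_of_dominated_convergence (μ := f t)
      (F := fun n => hfun l n) (f := w0 l) (fun x => l * |x|)
      (fun n => (hfun_continuous l n).aestronglyMeasurable)
      hIl
      (fun n => by
        filter_upwards [ae_mem_Ioi (hpos t ht.le)] with x hx
        have hx' : (0:ℝ) < x := hx
        rw [Real.norm_eq_abs, abs_of_nonneg hx'.le]
        have h1 : |hfun l n x| ≤ 1 * w0 l x := by
          rw [one_mul, hfun, abs_of_nonneg (mul_nonneg (w0_nonneg hl.le hx'.le) (chi_nonneg n x))]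
          nlinarith [chi_le_one n x, chi_nonneg n x, w0_nonneg hl.le hx'.le]
        calc |hfun l n x| ≤ 1 * w0 l x := h1
          _ ≤ l * x := by rw [one_mul]; exact w0_le_linear)
      (by
        filter_upwards [ae_mem_Ioi (hpos t ht.le)] with x hx
        exact hhh x (mem_Ioi.1 hx))
    rwa [Btr_eq_integral hl (hpos t ht.le)] at hlim
  -- frequently, the time integrand is interval integrable
  have hfreq : ∃ᶠ n in atTop, IntervalIntegrable (Λ n) volume 0 t := by
    by_contra hev
    rw [Filter.not_frequently] at hev
    have hconst : ∀ᶠ n : ℕ in atTop, (∫ x, hfun l n x ∂(f t)) = t * l := by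
      filter_upwards [hev] with n hn
      have := hEQ n
      rwa [intervalIntegral.integral_undef hn, zero_add] at this
    have hlim2 : Tendsto (fun n : ℕ => ∫ x, hfun l n x ∂(f t)) atTop (nhds (t * l)) := by
      apply Tendsto.congr' _ tendsto_const_nhds
      filter_upwards [hconst] with n hn
      exact hn.symm
    have : Btr f l t = t * l := tendsto_nhds_unique hAn hlim2
    exact Btr_ne hl ht (hpos t ht.le) (hmass t ht.le) this
  obtain ⟨ns, hns_mono, hns⟩ := Filter.extraction_of_frequently_atTop hfreq
  -- a.e. strong measurability of the limit
  have hmeas_k : ∀ k : ℕ, AEStronglyMeasurable (Λ (ns k)) (volume.restrict (Set.uIoc (0:ℝ) t)) := by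
    intro k
    have := (hns k).1
    rw [uIoc_of_le ht.le]
    exact this.aestronglyMeasurable
  have hae_lim : ∀ᵐ s ∂(volume.restrict (Set.uIoc (0:ℝ) t)),
      Tendsto (fun k : ℕ => Λ (ns k) s) atTop (nhds (-(Btr f l s)^2)) := by
    rw [uIoc_of_le ht.le]
    rw [ae_restrict_iff' measurableSet_Ioc]
    apply ae_of_all
    intro s hs
    exact (hΛlim s (le_of_lt hs.1)).comp (hns_mono.tendsto_atTop)
  have hQm : AEStronglyMeasurable (fun s => -(Btr f l s)^2) (volume.restrict (Set.uIoc (0:ℝ) t)) :=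
    aestronglyMeasurable_of_tendsto_ae atTop hmeas_k hae_lim
  have hQm' : AEStronglyMeasurable (fun s => (Btr f l s)^2) (volume.restrict (Ioc (0:ℝ) t)) := by
    rw [← uIoc_of_le ht.le]
    exact (hQm.neg).congr (ae_of_all _ (fun s => by simp))
  -- dominated convergence for the time integral
  have hDCT : Tendsto (fun k : ℕ => ∫ s in (0:ℝ)..t, Λ (ns k) s) atTop
      (nhds (∫ s in (0:ℝ)..t, -(Btr f l s)^2)) := by
    apply intervalIntegral.tendsto_integral_filter_of_dominated_convergence
      (bound := fun _ => C * t * t) (Eventually.of_forall hmeas_k) ?_ intervalIntegrable_const ?_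
    · apply Eventually.of_forall
      intro k
      apply ae_of_all
      intro s hs
      rw [uIoc_of_le ht.le] at hs
      rw [Real.norm_eq_abs]
      exact hΛbd (ns k) s (le_of_lt hs.1) hs.2
    · apply ae_of_all
      intro s hs
      rw [uIoc_of_le ht.le] at hs
      exact (hΛlim s (le_of_lt hs.1)).comp (hns_mono.tendsto_atTop)
  -- convergence of the subsequence of the equation
  have hsub_lim : Tendsto (fun k : ℕ => ∫ s in (0:ℝ)..t, Λ (ns k) s) atTop
      (nhds (Btr f l t - t * l)) := by
    have h1 : Tendsto (fun k : ℕ => ∫ x, hfun l (ns k) x ∂(f t)) atTop (nhds (Btr f l t)) :=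
      hAn.comp hns_mono.tendsto_atTop
    have h2 : (fun k : ℕ => ∫ s in (0:ℝ)..t, Λ (ns k) s)
        = fun k => (∫ x, hfun l (ns k) x ∂(f t)) - t * l := by
      funext k
      rw [hEQ (ns k)]
      ring
    rw [h2]
    exact h1.sub_const (t * l)
  have hkey : Btr f l t - t * l = ∫ s in (0:ℝ)..t, -(Btr f l s)^2 :=
    tendsto_nhds_unique hsub_lim hDCT
  refine ⟨hQm', ?_⟩
  rw [intervalIntegral.integral_neg] at hkey
  linarith [hkey]

end CoagAux
end

-- part 9 : ODE uniqueness via Gronwall-type iteration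
noncomputable section
namespace CoagAux
open MeasureTheory Set ENNReal Filter

lemma abs_tanh_le_one (x : ℝ) : |Real.tanh x| ≤ 1 := by
  rw [Real.tanh_eq_sinh_div_cosh, abs_div, abs_of_pos (Real.cosh_pos x),
    div_le_one (Real.cosh_pos x), abs_le]
  constructor <;> nlinarith [Real.cosh_sq x, Real.cosh_pos x,
    sq_nonneg (Real.sinh x + Real.cosh x), sq_nonneg (Real.sinh x - Real.cosh x)]

lemma hasDerivAt_tanh (x : ℝ) : HasDerivAt Real.tanh (1 - Real.tanh x ^ 2) x := by
  have hc := Real.cosh_pos x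
  have hdiv : HasDerivAt (fun y => Real.sinh y / Real.cosh y)
      ((Real.cosh x * Real.cosh x - Real.sinh x * Real.sinh x) / Real.cosh x ^ 2) x :=
    (Real.hasDerivAt_sinh x).div (Real.hasDerivAt_cosh x) hc.ne'
  have h2 : HasDerivAt Real.tanh
      ((Real.cosh x * Real.cosh x - Real.sinh x * Real.sinh x) / Real.cosh x ^ 2) x := by
    apply hdiv.congr_of_eventuallyEq
    exact Filter.Eventually.of_forall (fun y => Real.tanh_eq_sinh_div_cosh y)
  convert h2 using 1
  rw [Real.tanh_eq_sinh_div_cosh, div_pow]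
  have hcs := Real.cosh_sq x
  field_simp

lemma ode_unique (B : ℝ → ℝ) (l : ℝ) (hl : 0 < l)
    (hB0 : ∀ s, 0 ≤ s → 0 ≤ B s ∧ B s ≤ l * s)
    (hBm : ∀ t, 0 < t → AEStronglyMeasurable (fun s => (B s)^2) (volume.restrict (Ioc 0 t)))
    (hE : ∀ t, 0 < t → B t = l * t - ∫ s in (0:ℝ)..t, (B s)^2) :
    ∀ t, 0 ≤ t → B t = Real.sqrt l * Real.tanh (Real.sqrt l * t) := by
  have hsq : Real.sqrt l ^ 2 = l := Real.sq_sqrt hl.le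
  have hsqpos : 0 < Real.sqrt l := Real.sqrt_pos.2 hl
  set G : ℝ → ℝ := fun x => Real.sqrt l * Real.tanh (Real.sqrt l * x) with hGdef
  have hG0 : G 0 = 0 := by simp [hGdef]
  have hGd : ∀ x, HasDerivAt G (l - G x ^ 2) x := by
    intro x
    have h1 : HasDerivAt (fun y : ℝ => Real.sqrt l * y) (Real.sqrt l) x := by
      simpa using (hasDerivAt_id x).const_mul (Real.sqrt l)
    have h2 := ((hasDerivAt_tanh (Real.sqrt l * x)).comp x h1).const_mul (Real.sqrt l)
    refine HasDerivAt.congr_deriv h2 ?_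
    have : G x = Real.sqrt l * Real.tanh (Real.sqrt l * x) := rfl
    rw [this]
    nlinarith [hsq]
  have hGb : ∀ x, |G x| ≤ Real.sqrt l := by
    intro x
    rw [hGdef]
    calc |Real.sqrt l * Real.tanh (Real.sqrt l * x)|
        = Real.sqrt l * |Real.tanh (Real.sqrt l * x)| := by
          rw [abs_mul, abs_of_nonneg hsqpos.le]
      _ ≤ Real.sqrt l * 1 := by
          apply mul_le_mul_of_nonneg_left (abs_tanh_le_one _) hsqpos.le
      _ = Real.sqrt l := by ring
  have htanh_cont : Continuous Real.tanh := by
    have : Differentiable ℝ Real.tanh := fun x => (hasDerivAt_tanh x).differentiableAt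
    exact this.continuous
  have hGcont : Continuous G :=
    continuous_const.mul (htanh_cont.comp (continuous_const.mul continuous_id))
  have hGeq : ∀ u : ℝ, G u = l * u - ∫ s in (0:ℝ)..u, (G s)^2 := by
    intro u
    have hftc : (∫ s in (0:ℝ)..u, (l - G s ^ 2)) = G u - G 0 :=
      intervalIntegral.integral_eq_sub_of_hasDerivAt (fun x _ => hGd x)
        ((continuous_const.sub (hGcont.pow 2)).intervalIntegrable 0 u)
    have hsplit : (∫ s in (0:ℝ)..u, (l - G s ^ 2))
        = (∫ s in (0:ℝ)..u, l) - ∫ s in (0:ℝ)..u, (G s)^2 :=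
      intervalIntegral.integral_sub (intervalIntegrable_const)
        ((hGcont.pow 2).intervalIntegrable 0 u)
    rw [hsplit, hG0, sub_zero] at hftc
    rw [intervalIntegral.integral_const, smul_eq_mul, sub_zero] at hftc
    linarith [hftc]
  intro t ht
  rcases ht.eq_or_lt with rfl | ht'
  · have h := hB0 0 le_rfl
    have hB00 : B 0 = 0 := le_antisymm (by simpa using h.2) h.1
    rw [hB00]
    simp
  -- now t > 0
  set K : ℝ := l * t + Real.sqrt l with hKdef
  have hK0 : 0 < K := by positivity
  -- interval integrability of the difference integrand
  have hint : ∀ u, 0 < u → u ≤ t →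
      IntervalIntegrable (fun s => (B s)^2) volume 0 u ∧
      IntervalIntegrable (fun s => (G s)^2) volume 0 u := by
    intro u hu hut
    constructor
    · rw [intervalIntegrable_iff_integrableOn_Ioc_of_le hu.le]
      have hmeas : AEStronglyMeasurable (fun s => (B s)^2) (volume.restrict (Ioc 0 u)) :=
        hBm u hu
      have hconst : IntegrableOn (fun _ : ℝ => (l*t)^2) (Ioc (0:ℝ) u) volume :=
        integrableOn_const measure_Ioc_lt_top.ne
      apply Integrable.mono' hconst hmeas
      rw [ae_restrict_iff' measurableSet_Ioc]
      apply ae_of_all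
      intro s hs
      have h1 := hB0 s (le_of_lt hs.1)
      rw [Real.norm_eq_abs, abs_of_nonneg (sq_nonneg _)]
      have hBt : B s ≤ l * t := h1.2.trans (by nlinarith [hs.2, hs.1])
      nlinarith [h1.1, hBt]
    · exact (hGcont.pow 2).intervalIntegrable 0 u
  -- the key iteration
  have iter : ∀ m : ℕ, ∀ u, 0 ≤ u → u ≤ t →
      |B u - G u| ≤ K * ((K * u)^m / m.factorial) := by
    intro m
    induction m with
    | zero =>
      intro u hu hut
      have h1 := hB0 u hu
      have h2 := hGb u
      have h3 : |B u| ≤ l * t := by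
        rw [abs_of_nonneg h1.1]
        nlinarith [h1.2]
      calc |B u - G u| ≤ |B u| + |G u| := abs_sub _ _
        _ ≤ l * t + Real.sqrt l := add_le_add h3 h2
        _ = K * ((K*u)^0 / (Nat.factorial 0 : ℝ)) := by simp [hKdef]
    | succ m ih =>
      intro u hu hut
      rcases hu.eq_or_lt with rfl | hu'
      · have h := hB0 0 le_rfl
        have hB00 : B 0 = 0 := le_antisymm (by simpa using h.2) h.1
        simp [hB00, hG0]
      -- u > 0
      have hDu : B u - G u = -∫ s in (0:ℝ)..u, ((B s)^2 - (G s)^2) := by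
        have h1 := hE u hu'
        have h2 := hGeq u
        have h3 := (hint u hu' hut).1
        have h4 := (hint u hu' hut).2
        rw [intervalIntegral.integral_sub h3 h4]
        linarith [h1, h2]
      have hbound : ∀ s, 0 < s → s ≤ u → |(B s)^2 - (G s)^2|
          ≤ (K^(m+2) / m.factorial) * s^m := by
        intro s hs hsu
        have hih := ih s hs.le (hsu.trans hut)
        have h1 := hB0 s hs.le
        have h2 := hGb s
        have hBG : |B s + G s| ≤ K := by
          rw [abs_le]
          have h2' := abs_le.1 h2
          constructor
          · nlinarith [h1.1, h2'.1, hl.le]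
          · have : B s ≤ l * t := h1.2.trans (by nlinarith [hsu, hut, hs])
            nlinarith [h2'.2]
        have hfact : (B s)^2 - (G s)^2 = (B s + G s) * (B s - G s) := by ring
        rw [hfact, abs_mul]
        have hKm : |B s - G s| ≤ K * ((K * s)^m / m.factorial) := hih
        calc |B s + G s| * |B s - G s| ≤ K * (K * ((K * s)^m / m.factorial)) := by
              apply mul_le_mul hBG hKm (abs_nonneg _) hK0.le
          _ = (K^(m+2) / m.factorial) * s^m := by
              rw [mul_pow]
              field_simp
              ring
      have hnorm : |B u - G u| ≤ |∫ s in (0:ℝ)..u, (K^(m+2) / m.factorial) * s^m| := by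
        rw [hDu, abs_neg]
        have := intervalIntegral.norm_integral_le_abs_of_norm_le
          (f := fun s => (B s)^2 - (G s)^2) (g := fun s => (K^(m+2) / m.factorial) * s^m)
          (μ := volume) (a := 0) (b := u) ?_ ?_
        · rwa [Real.norm_eq_abs] at this
        · rw [uIoc_of_le hu'.le, ae_restrict_iff' measurableSet_Ioc]
          apply ae_of_all
          intro s hs
          rw [Real.norm_eq_abs]
          exact hbound s hs.1 hs.2
        · apply Continuous.intervalIntegrable
          exact continuous_const.mul (continuous_pow m)
      have hcomp : (∫ s in (0:ℝ)..u, (K^(m+2) / m.factorial) * s^m)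
          = K * ((K * u)^(m+1) / (m+1).factorial) := by
        rw [intervalIntegral.integral_const_mul, integral_pow]
        rw [Nat.factorial_succ, mul_pow]
        push_cast
        have hm0 : ((m.factorial : ℝ)) ≠ 0 := by exact_mod_cast (Nat.factorial_pos m).ne'
        have hm1 : ((m:ℝ) + 1) ≠ 0 := by positivity
        field_simp
        ring
      rw [hcomp] at hnorm
      have hrhs : 0 ≤ K * ((K * u)^(m+1) / ((m+1).factorial : ℝ)) := by
        apply mul_nonneg hK0.le
        apply div_nonneg (pow_nonneg (mul_nonneg hK0.le hu) _) (by positivity)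
      rwa [abs_of_nonneg hrhs] at hnorm
  -- let m → ∞
  have hlim : Tendsto (fun m : ℕ => K * ((K * t)^m / m.factorial)) atTop (nhds 0) := by
    have := FloorSemiring.tendsto_pow_div_factorial_atTop (K * t)
    have h2 := this.const_mul K
    simpa using h2
  have hle : |B t - G t| ≤ 0 := by
    apply ge_of_tendsto hlim
    apply Eventually.of_forall
    intro m
    exact iter m t ht le_rfl
  have : B t = G t := by
    have := abs_nonneg (B t - G t)
    have h0 : |B t - G t| = 0 := le_antisymm hle this
    have := abs_eq_zero.1 h0
    linarith [this]
  exact this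

end CoagAux
end


/-- uniqueness part of Proposition 6.14 of the paper: for
the constant kernel `K ≡ 2` and zero initial data, any weak solution
`(f_t)_{t≥0}` of the coagulation equation with a unit flux of dust entering at
zero — i.e. every `f_t` has finite first moment, `t ↦ ∫ xφ(x) f_t(dx)` is
continuous for compactly supported continuous `φ`, and for all `C¹` compactly
supported `φ : [0,∞) → ℝ` and `t ≥ 0`,
`∫ xφ(x) f_t(dx) = ∫_0^t ∬ [(x+y)φ(x+y) − xφ(x) − yφ(y)] f_s(dx)f_s(dy) ds + t·φ(0)` —
has uniquely determined Bernstein transform: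
`∫ (1 − e^{−λx}) f_t(dx) = √λ·tanh(√λ·t)` for all `t ≥ 0`, `λ > 0`. -/
theorem constant_kernel_flux_solution_bernstein_transform
    (f : ℝ → Measure ℝ)
    (hpos : ∀ t ≥ (0:ℝ), (f t) (Iic 0) = 0)
    (hmom : ∀ t ≥ (0:ℝ), (∫⁻ x in Ioi (0:ℝ), ENNReal.ofReal x ∂(f t)) < ∞)
    (hcont : ∀ φ : ℝ → ℝ, Continuous φ → HasCompactSupport φ →
      tsupport φ ⊆ Ioi 0 →
      ContinuousOn (fun t => ∫ x in Ioi (0:ℝ), x * φ x ∂(f t)) (Ici 0))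
    (heq : ∀ φ : ℝ → ℝ, ContDiff ℝ 1 φ → HasCompactSupport φ →
      ∀ t ≥ (0:ℝ),
        (∫ x in Ioi (0:ℝ), x * φ x ∂(f t))
          = (∫ s in (0:ℝ)..t,
              ∫ p in (Ioi (0:ℝ)) ×ˢ (Ioi (0:ℝ)),
                ((p.1 + p.2) * φ (p.1 + p.2) - p.1 * φ p.1 - p.2 * φ p.2)
                  ∂((f s).prod (f s)))
            + t * φ 0) :
    ∀ t ≥ (0:ℝ), ∀ l > (0:ℝ),
      (∫⁻ x in Ioi (0:ℝ), ENNReal.ofReal (1 - Real.exp (-(l * x))) ∂(f t))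
        = ENNReal.ofReal (Real.sqrt l * Real.tanh (Real.sqrt l * t)) := by
  intro t ht l hl
  have hmass := CoagAux.mass_bound f hmom heq
  have hfin : (∫⁻ x in Ioi (0:ℝ), ENNReal.ofReal (1 - Real.exp (-(l * x))) ∂(f t)) ≠ ⊤ := by
    have := CoagAux.Btr_lintegral_le (f := f) hl ht (hmass t ht)
    exact (lt_of_le_of_lt this (by simp)).ne
  have hB0 : ∀ s, 0 ≤ s → 0 ≤ CoagAux.Btr f l s ∧ CoagAux.Btr f l s ≤ l * s := by
    intro s hs
    exact ⟨CoagAux.Btr_nonneg s, CoagAux.Btr_le hl hs (hmass s hs)⟩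
  have hBm : ∀ u, 0 < u → AEStronglyMeasurable (fun s => (CoagAux.Btr f l s)^2)
      (volume.restrict (Ioc 0 u)) :=
    fun u hu => (CoagAux.bernstein_eq f hpos hmom heq hl hu).1
  have hE : ∀ u, 0 < u → CoagAux.Btr f l u = l * u - ∫ s in (0:ℝ)..u, (CoagAux.Btr f l s)^2 :=
    fun u hu => (CoagAux.bernstein_eq f hpos hmom heq hl hu).2
  have hode := CoagAux.ode_unique (CoagAux.Btr f l) l hl hB0 hBm hE t ht
  rw [← ENNReal.ofReal_toReal hfin]
  exact congrArg ENNReal.ofReal hode
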